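/- arXiv:1605.05090 — 7 statements merged into one kernel-verified Lean document; each statement's English description precedes it below -/
import Mathlib

section
/- Let c ∈ ℕ, let G be an arbitrary group, and let L be a Lie algebra with a grading (L_g)_{g∈G} by G with support X. Then L is nilpotent of class at most c if and only if for every abelian subgroup H of G the homogeneous subalgebra L_H := ⊕_{h∈H} L_h of L (which is graded by H with support X ∩ H) is nilpotent of class at most c. -/
/-! ## Arithmetically-free sets -/

/-- The subset `X` of an additive abelian group is arithmetically-free iff it is finite and
for all `x, g ∈ X` the arithmetic progression `{x + n • g : n ∈ ℕ}` is not contained in `X`. -/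
def ArithFree {G : Type*} [AddCommGroup G] (X : Set G) : Prop :=
  X.Finite ∧ ∀ x ∈ X, ∀ g ∈ X, ¬ (∀ n : ℕ, x + n • g ∈ X)

/-- The subset `X` of an arbitrary (multiplicative) group is arithmetically-free iff it is
finite and every subset of `X` of pairwise commuting elements is arithmetically-free (in the
abelian subgroup it generates), i.e. contains no full arithmetic progression
`{x * g ^ n : n ∈ ℕ}` with `x, g` in the subset. -/
def ArithFreeMul {G : Type*} [Group G] (X : Set G) : Prop :=
  X.Finite ∧ ∀ Y ⊆ X, (∀ a ∈ Y, ∀ b ∈ Y, a * b = b * a) →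
    ∀ x ∈ Y, ∀ g ∈ Y, ¬ (∀ n : ℕ, x * g ^ n ∈ Y)

/-! ## Gradings of Lie algebras -/

/-- A grading of a Lie algebra `L` over `F` by a multiplicative group `G`: a family of
subspaces forming an internal direct sum decomposition with `⁅L_g, L_h⁆ ⊆ L_{g*h}`. -/
structure LieGrading (F G L : Type*) [Field F] [Group G] [LieRing L] [LieAlgebra F L] where
  piece : G → Submodule F L
  independent : iSupIndep piece
  iSup_eq_top : ⨆ g, piece g = ⊤
  bracket_mem : ∀ g h : G, ∀ x ∈ piece g, ∀ y ∈ piece h, ⁅x, y⁆ ∈ piece (g * h)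

/-- The support of a grading. -/
def LieGrading.support {F G L : Type*} [Field F] [Group G] [LieRing L] [LieAlgebra F L]
    (gr : LieGrading F G L) : Set G := {g | gr.piece g ≠ ⊥}

/-- A grading of a Lie algebra `L` over `F` by an additive group `G`. -/
structure LieGradingAdd (F G L : Type*) [Field F] [AddGroup G] [LieRing L] [LieAlgebra F L] where
  piece : G → Submodule F L
  independent : iSupIndep piece
  iSup_eq_top : ⨆ g, piece g = ⊤
  bracket_mem : ∀ g h : G, ∀ x ∈ piece g, ∀ y ∈ piece h, ⁅x, y⁆ ∈ piece (g + h)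

/-- The support of an additive grading. -/
def LieGradingAdd.support {F G L : Type*} [Field F] [AddGroup G] [LieRing L] [LieAlgebra F L]
    (gr : LieGradingAdd F G L) : Set G := {g | gr.piece g ≠ ⊥}

/-! ## The generalised Higman map -/

/-- `f(α,λ) := λ · α ^ λ`. -/
def fmap (a l : ℕ) : ℕ := l * a ^ l

/-- `f_n(1,λ) := n` and `f_n(α+1,λ) := λ · (f_n(α,λ) + n)`. -/
def fseq (n : ℕ) : ℕ → ℕ → ℕ
  | 0, _ => n
  | 1, _ => n
  | (a + 2), l => l * (fseq n (a + 1) l + n)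

/-- The recursively defined maps `H_a(b,c)`: `H_a(1,c) = 1`, `H_a(b,1) = a` and, for `b,c > 1`,
`H_a(b,c) = max { a·f(c, a + H_a(b-1, a·f(c-1, H_a(b,c-1))) + 1), H_a(b-1,c), H_a(b,c-1) }`. -/
def Hrec (a : ℕ) : ℕ → ℕ → ℕ
  | 0, _ => 1
  | 1, _ => 1
  | _ + 2, 0 => a
  | _ + 2, 1 => a
  | b + 2, c + 2 =>
      max (a * fmap (c + 2) (a + Hrec a (b + 1) (a * fmap (c + 1) (Hrec a (b + 2) (c + 1))) + 1))
        (max (Hrec a (b + 1) (c + 2)) (Hrec a (b + 2) (c + 1)))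
  termination_by b c => (b, c)

/-- The generalised Higman map `H(n) := H_n(n,n)`. -/
def HigmanMap (n : ℕ) : ℕ := Hrec n n n

/-! ## Left-associated brackets, Lie monomials and Lie-regularity -/

/-- The left-associated bracket `[x₁, x₂, …, x_k]` of a list of elements of a Lie ring
(with the junk value `0` for the empty list). -/
def foldBracket {L : Type*} [LieRing L] : List L → L
  | [] => 0
  | x :: xs => xs.foldl (fun acc y => ⁅acc, y⁆) x

/-- A bracketed Lie monomial in the generators `v_1, …, v_l` (a full binary bracketing with
leaves labelled by generators). -/
inductive LieTree (l : ℕ) : Type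
  | leaf : Fin l → LieTree l
  | node : LieTree l → LieTree l → LieTree l

/-- The list of leaves of a bracketed Lie monomial. -/
def LieTree.leaves {l : ℕ} : LieTree l → List (Fin l)
  | .leaf i => [i]
  | .node s t => s.leaves ++ t.leaves

/-- The evaluation of a bracketed Lie monomial in a Lie ring. -/
def LieTree.eval {l : ℕ} {L : Type*} [LieRing L] (v : Fin l → L) : LieTree l → L
  | .leaf i => v i
  | .node s t => ⁅s.eval v, t.eval v⁆

/-- A sequence `(a_1, …, a_l)` on a totally ordered set `A` is Lie-regular iff there are
`k, m ∈ ℕ` with `k ≥ 1`, a bracketed Lie monomial `P` in which each of the generators `v_1, …, v_l` of the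
free Lie algebra on `u_1, …, u_k, v_1, …, v_l, w_1, …, w_m` occurs exactly once, a set
`S_P` of permutations of `{1, …, l}` containing the identity, and a sign map `ε : S_P → {±1}`
with `ε(id) = 1`, such that the linearisation identity
`[u_1,…,u_k, P, w_1,…,w_m] = Σ_{π ∈ S_P} ε(π)·[u_1,…,u_k, v_{π(1)},…,v_{π(l)}, w_1,…,w_m]`
holds in the free Lie algebra, and `(a_1,…,a_l)` is lexicographically strictly smaller than
`(a_{π(1)},…,a_{π(l)})` for every `π ∈ S_P` other than the identity. -/
def IsLieRegular {A : Type*} [LinearOrder A] (a : List A) : Prop :=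
  ∃ (k m : ℕ) (P : LieTree a.length)
    (SP : Finset (Equiv.Perm (Fin a.length))) (ε : Equiv.Perm (Fin a.length) → ℤ),
      1 ≤ k ∧
      P.leaves.Perm (List.finRange a.length) ∧
      (1 : Equiv.Perm (Fin a.length)) ∈ SP ∧ ε 1 = 1 ∧ (∀ π ∈ SP, ε π = 1 ∨ ε π = -1) ∧
      (∀ π ∈ SP, π ≠ 1 → List.Lex (· < ·) a (List.ofFn fun i => a.get (π i))) ∧
      (let u : Fin k → FreeLieAlgebra ℤ (Fin k ⊕ Fin a.length ⊕ Fin m) :=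
        fun i => FreeLieAlgebra.of ℤ (Sum.inl i)
      let v : Fin a.length → FreeLieAlgebra ℤ (Fin k ⊕ Fin a.length ⊕ Fin m) :=
        fun i => FreeLieAlgebra.of ℤ (Sum.inr (Sum.inl i))
      let w : Fin m → FreeLieAlgebra ℤ (Fin k ⊕ Fin a.length ⊕ Fin m) :=
        fun i => FreeLieAlgebra.of ℤ (Sum.inr (Sum.inr i))
      foldBracket (List.ofFn u ++ [P.eval v] ++ List.ofFn w) =
        ∑ π ∈ SP, ε π • foldBracket
          (List.ofFn u ++ List.ofFn (fun i => v (π i)) ++ List.ofFn w))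

/-! ## Words over an alphabet, regularity, fullness -/

/-- `Wn A n` is the `n`-fold iterated set of finite sequences: `W⁰(A) := A` and
`W^{n+1}(A) := W(W^n(A))`, where `W(B)` is the set of finite sequences (lists) on `B`. -/
def Wn (A : Type u) : ℕ → Type u
  | 0 => A
  | n + 1 => List (Wn A n)

/-- An element of `W^{n+1}(A)` is (definitionally) a list of elements of `W^n(A)`. -/
def Wn.toList {A : Type u} {n : ℕ} (S : Wn A (n + 1)) : List (Wn A n) := S

/-- The lexicographically extended linear orders on the `Wn A n`. -/
def WnOrder (A : Type u) [LinearOrder A] : ∀ n : ℕ, LinearOrder (Wn A n)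
  | 0 => inferInstanceAs (LinearOrder A)
  | n + 1 => letI := WnOrder A n; (inferInstance : LinearOrder (List (Wn A n)))

instance instWnOrder (A : Type u) [LinearOrder A] (n : ℕ) : LinearOrder (Wn A n) := WnOrder A n

/-- All elements of `W⁰(A) = A` have the same type; two elements of `W^{n+1}(A)` have the
same type iff their first entries coincide. -/
def SameTypeW (A : Type u) [LinearOrder A] : ∀ n : ℕ, Wn A n → Wn A n → Prop
  | 0, _, _ => True
  | n + 1, S, T => S.toList.head? = T.toList.head?

/-- Regular elements: every element of `W⁰(A) = A` is regular; an element `(x_1,…,x_k)` of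
`W^{n+1}(A)` is regular iff all `x_i` are regular of the same type and there is `1 ≤ l < k`
with `x_1 = ⋯ = x_l` strictly smaller than each of `x_{l+1}, …, x_k`. -/
def IsRegularW (A : Type u) [LinearOrder A] : ∀ n : ℕ, Wn A n → Prop
  | 0, _ => True
  | n + 1, S =>
      (∀ x ∈ S.toList, IsRegularW A n x) ∧
      (∀ x ∈ S.toList, ∀ y ∈ S.toList, SameTypeW A n x y) ∧
      ∃ (x : Wn A n) (l : ℕ) (xs : List (Wn A n)),
        1 ≤ l ∧ xs ≠ [] ∧ S.toList = List.replicate l x ++ xs ∧ ∀ y ∈ xs, x < y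

/-- The underlying sequence (iterated flattening) of an element of `W^n(A)`. -/
def flattenW (A : Type u) : ∀ n : ℕ, Wn A n → List A
  | 0, a => [a]
  | n + 1, S => (S.toList.map (flattenW A n)).flatten

/-- The span `σ(S) := {0, ω(a_1), ω(a_1)+ω(a_2), …, ω(a_1)+⋯+ω(a_k)}` of a finite sequence. -/
def spanOf {A : Type u} {G : Type*} [AddCommGroup G] (ω : A → G) (S : List A) : Set G :=
  {g | ∃ n ≤ S.length, g = ((S.take n).map ω).sum}

/-- `α(S) := ω⁻¹(X) ∩ {a_1, …, a_k}`. -/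
def alphaOf {A : Type u} {G : Type*} [AddCommGroup G] (ω : A → G) (X : Set G)
    (S : List A) : Set A :=
  (ω ⁻¹' X) ∩ {a | a ∈ S}

/-- `M` can be translated into `X` iff `h + M ⊆ X` for some `h`. -/
def TranslatesInto {G : Type*} [AddCommGroup G] (M X : Set G) : Prop :=
  ∃ h : G, ∀ m ∈ M, h + m ∈ X

/-- A finite sequence `S` on the alphabet `(A, <, ω, X)` is full iff (1) its span cannot be
translated into `X`, or (2) some consecutive segment `T` of `S` is the underlying sequence of
a regular element of `W^*(A)` and has weight `ω₁(T) ∈ G \ X`. -/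
def IsFull {A : Type u} {G : Type*} [LinearOrder A] [AddCommGroup G] (ω : A → G)
    (X : Set G) (S : List A) : Prop :=
  (¬ TranslatesInto (spanOf ω S) X) ∨
    ∃ T : List A, T <:+: S ∧
      (∃ (n : ℕ) (R : Wn A n), IsRegularW A n R ∧ flattenW A n R = T) ∧
      (T.map ω).sum ∉ X

/-- A derivation of `S ∈ W(A)` is a regular element `T ∈ W²(A)` whose underlying sequence is
a consecutive segment of `S`. -/
def IsDerivation {A : Type u} [LinearOrder A] (S : List A) (T : Wn A 2) : Prop :=
  IsRegularW A 2 T ∧ (flattenW A 2 T) <:+: S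

/-- A hyper-derivation of `S` is a derivation whose span (with respect to the weight `ω₁` of
the shifted alphabet) has strictly smaller cardinality than the span of `S`. -/
def IsHyperDerivation {A : Type u} {G : Type*} [LinearOrder A] [AddCommGroup G] (ω : A → G)
    (S : List A) (T : Wn A 2) : Prop :=
  IsDerivation S T ∧
    (spanOf (fun s : List A => (s.map ω).sum) T.toList).ncard < (spanOf ω S).ncard
/-- Right-normed bracket word. -/
def wv {L : Type*} [LieRing L] (b : L) (l : List L) : L :=
  l.foldr (fun x acc => ⁅x, acc⁆) b

@[simp] lemma wv_nil {L : Type*} [LieRing L] (b : L) : wv b [] = b := rfl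

@[simp] lemma wv_cons {L : Type*} [LieRing L] (b x : L) (l : List L) :
    wv b (x :: l) = ⁅x, wv b l⁆ := rfl

namespace LieGradingAux

variable {F G L : Type*} [Field F] [Group G] [LieRing L] [LieAlgebra F L]
  (gr : LieGrading F G L)

lemma eq_zero_of_mem_ne {g h : G} {x : L} (hne : g ≠ h)
    (hx : x ∈ gr.piece g) (hx' : x ∈ gr.piece h) : x = 0 :=
  Submodule.disjoint_def.mp (gr.independent.pairwiseDisjoint hne) x hx hx'

lemma bracket_zero_of_ne {g h : G} {x y : L} (hne : g * h ≠ h * g)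
    (hx : x ∈ gr.piece g) (hy : y ∈ gr.piece h) : ⁅x, y⁆ = 0 := by
  have h1 : ⁅x, y⁆ ∈ gr.piece (g * h) := gr.bracket_mem g h x hx y hy
  have h2 : ⁅x, y⁆ ∈ gr.piece (h * g) := by
    have := gr.bracket_mem h g y hy x hx
    have hxy : ⁅x, y⁆ = -⁅y, x⁆ := (lie_skew x y).symm
    rw [hxy]
    exact neg_mem this
  exact eq_zero_of_mem_ne gr hne h1 h2

/-- degree of a word -/
def wd (g0 : G) (l : List (G × L)) : G := l.foldr (fun p acc => p.1 * acc) g0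

lemma wv_mem {g0 : G} {b : L} {l : List (G × L)} (hb : b ∈ gr.piece g0)
    (hl : ∀ p ∈ l, p.2 ∈ gr.piece p.1) :
    wv b (l.map Prod.snd) ∈ gr.piece (wd g0 l) := by
  induction l with
  | nil => exact hb
  | cons p l ih =>
    exact gr.bracket_mem _ _ _ (hl p (by simp)) _
      (ih fun q hq => hl q (List.mem_cons_of_mem _ hq))

/-- Lemma D': bracketing a homogeneous element whose degree fails to commute with one
of the (pairwise commuting) degrees of a word kills the word. -/
lemma lie_wv_eq_zero {g0 : G} {b : L} (hb : b ∈ gr.piece g0) (l : List (G × L))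
    (hl : ∀ p ∈ l, p.2 ∈ gr.piece p.1)
    (hpc : ∀ a ∈ g0 :: l.map Prod.fst, ∀ c ∈ g0 :: l.map Prod.fst, a * c = c * a) :
    ∀ (h : G) (z : L), z ∈ gr.piece h →
      (∃ q ∈ g0 :: l.map Prod.fst, h * q ≠ q * h) →
      ⁅z, wv b (l.map Prod.snd)⁆ = 0 := by
  induction l with
  | nil =>
    rintro h z hz ⟨q, hq, hbad⟩
    simp only [List.map_nil, List.mem_singleton] at hq
    subst hq
    exact bracket_zero_of_ne gr hbad hz hb
  | cons p l ih =>
    rintro h z hz ⟨q, hq, hbad⟩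
    have hl' : ∀ r ∈ l, r.2 ∈ gr.piece r.1 := fun r hr => hl r (List.mem_cons_of_mem _ hr)
    have hpc' : ∀ a ∈ g0 :: l.map Prod.fst, ∀ c ∈ g0 :: l.map Prod.fst, a * c = c * a := by
      intro a ha c hc
      refine hpc a ?_ c ?_ <;>
        · rw [List.mem_cons] at ha hc ⊢
          simp only [List.map_cons, List.mem_cons]
          tauto
    have hWmem : wv b (l.map Prod.snd) ∈ gr.piece (wd g0 l) := wv_mem gr hb hl'
    have hpmem : p.2 ∈ gr.piece p.1 := hl p (by simp)
    have key : ⁅z, wv b ((p :: l).map Prod.snd)⁆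
        = ⁅⁅z, p.2⁆, wv b (l.map Prod.snd)⁆ + ⁅p.2, ⁅z, wv b (l.map Prod.snd)⁆⁆ := by
      simp only [List.map_cons]
      exact leibniz_lie z p.2 (wv b (l.map Prod.snd))
    by_cases hbad' : ∃ q ∈ g0 :: l.map Prod.fst, h * q ≠ q * h
    · -- case (i)
      have h2 : ⁅z, wv b (l.map Prod.snd)⁆ = 0 := ih hl' hpc' h z hz hbad'
      obtain ⟨q', hq', hbadq'⟩ := hbad'
      have h1 : ⁅⁅z, p.2⁆, wv b (l.map Prod.snd)⁆ = 0 := by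
        refine ih hl' hpc' (h * p.1) ⁅z, p.2⁆ (gr.bracket_mem _ _ _ hz _ hpmem)
          ⟨q', hq', ?_⟩
        intro hcontra
        apply hbadq'
        have hcomm : p.1 * q' = q' * p.1 := by
          refine hpc p.1 (by simp) q' ?_
          rw [List.mem_cons] at hq'
          simp only [List.map_cons, List.mem_cons]
          tauto
        have h3 : h * q' * p.1 = q' * h * p.1 := by
          rw [mul_assoc, ← hcomm, ← mul_assoc, hcontra, ← mul_assoc]
        exact mul_right_cancel h3
      rw [key, h1, h2, lie_zero, add_zero]
    · -- case (ii): h commutes with all of g0 :: l degrees; bad pair is with p.1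
      push_neg at hbad'
      have hq_eq : q = p.1 := by
        rcases List.mem_cons.mp hq with h' | h'
        · exact absurd (hbad' q (by simp [h'])) hbad
        · simp only [List.map_cons, List.mem_cons] at h'
          rcases h' with h' | h'
          · exact h'
          · exact absurd (hbad' q (by simp [List.mem_cons, h'])) hbad
      rw [hq_eq] at hbad
      have h1 : ⁅z, p.2⁆ = 0 := bracket_zero_of_ne gr hbad hz hpmem
      have hT1 : ⁅z, wv b ((p :: l).map Prod.snd)⁆
          ∈ gr.piece (h * (p.1 * wd g0 l)) := by
        refine gr.bracket_mem _ _ _ hz _ ?_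
        exact wv_mem gr hb hl
      have hT2 : ⁅z, wv b ((p :: l).map Prod.snd)⁆
          ∈ gr.piece (p.1 * (h * wd g0 l)) := by
        rw [key, h1, zero_lie, zero_add]
        exact gr.bracket_mem _ _ _ hpmem _ (gr.bracket_mem _ _ _ hz _ hWmem)
      refine eq_zero_of_mem_ne gr ?_ hT1 hT2
      intro hcontra
      rw [← mul_assoc, ← mul_assoc] at hcontra
      exact hbad (mul_right_cancel hcontra)

/-- A word whose degrees do not pairwise commute vanishes. -/
lemma wv_eq_zero_of_not_comm {g0 : G} {b : L} (hb : b ∈ gr.piece g0) (l : List (G × L))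
    (hl : ∀ p ∈ l, p.2 ∈ gr.piece p.1)
    (hnc : ¬ ∀ a ∈ g0 :: l.map Prod.fst, ∀ c ∈ g0 :: l.map Prod.fst, a * c = c * a) :
    wv b (l.map Prod.snd) = 0 := by
  induction l with
  | nil =>
    exfalso
    apply hnc
    intro a ha c hc
    simp only [List.map_nil, List.mem_singleton] at ha hc
    rw [ha, hc]
  | cons p l ih =>
    have hl' : ∀ r ∈ l, r.2 ∈ gr.piece r.1 := fun r hr => hl r (List.mem_cons_of_mem _ hr)
    by_cases hpc' : ∀ a ∈ g0 :: l.map Prod.fst, ∀ c ∈ g0 :: l.map Prod.fst, a * c = c * a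
    · -- bad pair involves p.1
      have hbad : ∃ q ∈ g0 :: l.map Prod.fst, p.1 * q ≠ q * p.1 := by
        by_contra hcon
        push_neg at hcon
        apply hnc
        intro a ha c hc
        have ha' : a = p.1 ∨ a ∈ g0 :: l.map Prod.fst := by
          simp only [List.map_cons, List.mem_cons] at ha ⊢; tauto
        have hc' : c = p.1 ∨ c ∈ g0 :: l.map Prod.fst := by
          simp only [List.map_cons, List.mem_cons] at hc ⊢; tauto
        rcases ha' with ha' | ha' <;> rcases hc' with hc' | hc'
        · rw [ha', hc']
        · rw [ha']; exact hcon c hc'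
        · rw [hc']; exact (hcon a ha').symm
        · exact hpc' a ha' c hc' 
      simp only [List.map_cons]
      exact lie_wv_eq_zero gr hb l hl' hpc' p.1 p.2 (hl p (by simp)) hbad
    · simp only [List.map_cons, wv_cons]
      rw [ih hl' hpc', lie_zero]

/-- The span of all homogeneous word values of a given length. -/
def wordSpan (k : ℕ) : Submodule F L :=
  Submodule.span F {m | ∃ (g0 : G) (b : L) (l : List (G × L)), b ∈ gr.piece g0 ∧
    (∀ p ∈ l, p.2 ∈ gr.piece p.1) ∧ l.length = k ∧ m = wv b (l.map Prod.snd)}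

lemma lcs_le_wordSpan (k : ℕ) :
    ∀ x ∈ LieModule.lowerCentralSeries F L L k, x ∈ wordSpan gr k := by
  induction k with
  | zero =>
    intro x _
    have hx : x ∈ ⨆ g, gr.piece g := by rw [gr.iSup_eq_top]; exact Submodule.mem_top
    refine Submodule.iSup_induction (motive := fun y => y ∈ wordSpan gr 0) _ hx
      (fun g y hy => ?_) (Submodule.zero_mem _) (fun y z hy hz => Submodule.add_mem _ hy hz)
    exact Submodule.subset_span ⟨g, y, [], hy, by simp, rfl, rfl⟩
  | succ k ih =>
    intro x hx
    rw [LieModule.lowerCentralSeries_succ, ← LieSubmodule.mem_toSubmodule,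
      LieSubmodule.lieIdeal_oper_eq_linear_span'] at hx
    refine Submodule.span_induction ?_ (Submodule.zero_mem _)
      (fun a b _ _ ha hb => Submodule.add_mem _ ha hb)
      (fun t a _ ha => Submodule.smul_mem _ t ha) hx
    rintro m ⟨y, -, n, hn, rfl⟩
    have hn' : n ∈ wordSpan gr k := ih n hn
    -- first reduce n to a generator
    refine Submodule.span_induction (p := fun n _ => ⁅y, n⁆ ∈ wordSpan gr (k + 1)) ?_
      (by simp [Submodule.zero_mem]) (fun a b _ _ ha hb => by
        show ⁅y, a + b⁆ ∈ wordSpan gr (k + 1)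
        rw [lie_add]; exact Submodule.add_mem _ ha hb)
      (fun t a _ ha => by
        show ⁅y, t • a⁆ ∈ wordSpan gr (k + 1)
        rw [lie_smul]; exact Submodule.smul_mem _ t ha) hn'
    rintro n' ⟨g0, b, l, hb, hl, hlen, rfl⟩
    -- now decompose y over the pieces
    have hy : y ∈ ⨆ g, gr.piece g := by rw [gr.iSup_eq_top]; exact Submodule.mem_top
    refine Submodule.iSup_induction
      (motive := fun y => ⁅y, wv b (l.map Prod.snd)⁆ ∈ wordSpan gr (k + 1)) _ hy
      (fun g y hy => ?_) (by simp [Submodule.zero_mem])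
      (fun y z hy hz => by
        show ⁅y + z, wv b (l.map Prod.snd)⁆ ∈ wordSpan gr (k + 1)
        rw [add_lie]; exact Submodule.add_mem _ hy hz)
    exact Submodule.subset_span ⟨g0, b, (g, y) :: l, hb,
      by rintro p hp; rcases List.mem_cons.mp hp with h | h; · subst h; exact hy
         · exact hl p h,
      by simp [hlen], by simp [wv]⟩

/-- Closure of a pairwise-commuting set is abelian. -/
lemma closure_comm {S : Set G} (hS : ∀ a ∈ S, ∀ b ∈ S, a * b = b * a) :
    ∀ a ∈ Subgroup.closure S, ∀ b ∈ Subgroup.closure S, a * b = b * a := by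
  have key : ∀ a ∈ Subgroup.closure S, ∀ b ∈ Subgroup.closure S, Commute a b := by
    intro a ha b hb
    induction ha using Subgroup.closure_induction with
    | mem x hx =>
      induction hb using Subgroup.closure_induction with
      | mem y hy => exact hS x hx y hy
      | one => exact Commute.one_right x
      | mul y z _ _ hy hz => exact hy.mul_right hz
      | inv y _ hy => exact hy.inv_right
    | one => exact Commute.one_left b
    | mul x y _ _ hx hy => exact hx.mul_left hy
    | inv x _ hx => exact hx.inv_left
  exact key

/-- The homogeneous submodule attached to a subgroup is closed under the bracket. -/
lemma bracket_mem_iSup (H : Subgroup G) {x y : L}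
    (hx : x ∈ ⨆ h ∈ (H : Set G), gr.piece h) (hy : y ∈ ⨆ h ∈ (H : Set G), gr.piece h) :
    ⁅x, y⁆ ∈ ⨆ h ∈ (H : Set G), gr.piece h := by
  rw [iSup_subtype'] at hx hy ⊢
  induction hx using Submodule.iSup_induction' with
  | mem g x hxg =>
    induction hy using Submodule.iSup_induction' with
    | mem h y hyh =>
      refine Submodule.mem_iSup_of_mem ⟨(g : G) * (h : G), mul_mem g.2 h.2⟩ ?_
      exact gr.bracket_mem _ _ _ hxg _ hyh
    | zero => simp
    | add y z _ _ hy hz =>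
      rw [lie_add]; exact Submodule.add_mem _ hy hz
  | zero => simp
  | add x z _ _ hx hz =>
    rw [add_lie]; exact Submodule.add_mem _ hx hz

/-- Lift a list into a subalgebra. -/
lemma exists_lift (K : LieSubalgebra F L) (l : List L) (h : ∀ x ∈ l, x ∈ K) :
    ∃ l' : List K, l'.map (Subtype.val) = l := by
  induction l with
  | nil => exact ⟨[], rfl⟩
  | cons x l ih =>
    obtain ⟨l', hl'⟩ := ih (fun y hy => h y (List.mem_cons_of_mem _ hy))
    exact ⟨⟨x, h x (by simp)⟩ :: l', by simp [hl']⟩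

lemma coe_wv (K : LieSubalgebra F L) (b : K) (l : List K) :
    ((wv b l : K) : L) = wv (b : L) (l.map Subtype.val) := by
  induction l with
  | nil => rfl
  | cons x l ih => simp [wv_cons, LieSubalgebra.coe_bracket, ih]

lemma wv_mem_lcs {L' : Type*} [LieRing L'] [LieAlgebra F L'] (b : L') (l : List L') :
    wv b l ∈ LieModule.lowerCentralSeries F L' L' l.length := by
  induction l with
  | nil => simp
  | cons x l ih =>
    rw [List.length_cons, LieModule.lowerCentralSeries_succ, wv_cons]
    exact LieSubmodule.lie_mem_lie (LieSubmodule.mem_top x) ih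

/-- Coercion of subalgebra lower central series into the ambient algebra. -/
lemma lcs_coe_le (K : LieSubalgebra F L) (k : ℕ) :
    ∀ x ∈ LieModule.lowerCentralSeries F K K k,
      (x : L) ∈ LieModule.lowerCentralSeries F L L k := by
  induction k with
  | zero => intro x _; simp
  | succ k ih =>
    intro x hx
    rw [LieModule.lowerCentralSeries_succ, ← LieSubmodule.mem_toSubmodule,
      LieSubmodule.lieIdeal_oper_eq_linear_span'] at hx
    rw [LieModule.lowerCentralSeries_succ]
    refine Submodule.span_induction (p := fun m _ =>
        ((m : K) : L) ∈ ⁅(⊤ : LieIdeal F L), LieModule.lowerCentralSeries F L L k⁆) ?_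
      (by simp) (fun a b _ _ ha hb => by
        show ((a + b : K) : L) ∈ _
        have : ((a + b : K) : L) = (a : L) + (b : L) := rfl
        rw [this]; exact add_mem ha hb)
      (fun t a _ ha => by
        show ((t • a : K) : L) ∈ _
        have : ((t • a : K) : L) = t • (a : L) := rfl
        rw [this]; exact Submodule.smul_mem _ t ha) hx
    rintro m ⟨y, -, n, hn, rfl⟩
    show ((⁅y, n⁆ : K) : L) ∈ _
    rw [LieSubalgebra.coe_bracket]
    exact LieSubmodule.lie_mem_lie (LieSubmodule.mem_top _) (ih n hn)

end LieGradingAux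

/-- A Lie algebra graded by a group `G` is nilpotent of class at most `c`
iff for every abelian subgroup `H` of `G` the homogeneous subalgebra
`L_H = ⊕_{h ∈ H} L_h` (graded by `H` with support `X ∩ H`) is nilpotent of class at most
`c`. -/
theorem lie_grading_nilpotent_iff_abelian_subgroups
    {F G L : Type*} [Field F] [Group G] [LieRing L] [LieAlgebra F L]
    (gr : LieGrading F G L) (c : ℕ) :
    LieModule.lowerCentralSeries F L L c = ⊥ ↔
      ∀ H : Subgroup G, (∀ a ∈ H, ∀ b ∈ H, a * b = b * a) →
        ∀ K : LieSubalgebra F L, (K.toSubmodule = ⨆ h ∈ (H : Set G), gr.piece h) →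
          LieModule.lowerCentralSeries F K K c = ⊥ := by
  constructor
  · intro hL H _ K _
    refine (LieSubmodule.eq_bot_iff _).mpr fun x hx => ?_
    have h1 := LieGradingAux.lcs_coe_le K c x hx
    rw [hL] at h1
    exact Subtype.ext ((LieSubmodule.mem_bot _).mp h1)
  · intro hyp
    refine (LieSubmodule.eq_bot_iff _).mpr fun x hx => ?_
    have hx' : x ∈ LieGradingAux.wordSpan gr c := LieGradingAux.lcs_le_wordSpan gr c x hx
    have hle : LieGradingAux.wordSpan gr c ≤ ⊥ := by
      rw [LieGradingAux.wordSpan, Submodule.span_le]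
      rintro m ⟨g0, b, l, hb, hl, hlen, rfl⟩
      rw [SetLike.mem_coe, Submodule.mem_bot]
      by_cases hpc : ∀ a ∈ g0 :: l.map Prod.fst, ∀ c' ∈ g0 :: l.map Prod.fst, a * c' = c' * a
      · -- all degrees commute: use the hypothesis for the generated abelian subgroup
        set S : Set G := {a | a ∈ g0 :: l.map Prod.fst} with hS
        set H : Subgroup G := Subgroup.closure S with hH
        have hab : ∀ a ∈ H, ∀ b' ∈ H, a * b' = b' * a :=
          LieGradingAux.closure_comm (fun a ha b' hb' => hpc a ha b' hb')
        let K : LieSubalgebra F L :=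
          { (⨆ h ∈ (H : Set G), gr.piece h : Submodule F L) with
            lie_mem' := fun hx hy => LieGradingAux.bracket_mem_iSup gr H hx hy }
        have hK := hyp H hab K rfl
        have hmemK : ∀ g' ∈ g0 :: l.map Prod.fst, ∀ z ∈ gr.piece g', z ∈ K := by
          intro g' hg' z hz
          have hg'H : g' ∈ (H : Set G) := Subgroup.subset_closure hg'
          exact Submodule.mem_iSup_of_mem g' (Submodule.mem_iSup_of_mem hg'H hz)
        have hbK : b ∈ K := hmemK g0 (by simp) b hb
        have hlK : ∀ z ∈ l.map Prod.snd, z ∈ K := by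
          intro z hz
          obtain ⟨p, hp, rfl⟩ := List.mem_map.mp hz
          exact hmemK p.1 (List.mem_cons.mpr (Or.inr (List.mem_map.mpr ⟨p, hp, rfl⟩)))
            p.2 (hl p hp)
        obtain ⟨l', hl'⟩ := LieGradingAux.exists_lift K (l.map Prod.snd) hlK
        have hlen' : l'.length = c := by
          have := congrArg List.length hl'
          simpa [hlen] using this
        have hw : wv (⟨b, hbK⟩ : K) l' ∈ LieModule.lowerCentralSeries F K K c := by
          rw [← hlen']
          exact LieGradingAux.wv_mem_lcs _ _
        rw [hK, LieSubmodule.mem_bot] at hw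
        have := congrArg (Subtype.val) hw
        rw [LieGradingAux.coe_wv, hl'] at this
        simpa using this
      · exact LieGradingAux.wv_eq_zero_of_not_comm gr hb l hl hpc
    simpa using hle hx'
end

section
/- Let (L_g)_{g∈G} be a grading of a Lie algebra L by a group (G,+) with support X, and let f : X → Y be a contraction of X onto a subset Y of a group (H,+). Then setting L^y := ⊕_{x ∈ f⁻¹(y)} L_x for y ∈ Y and L^h := 0 for h ∈ H \ Y defines a grading of L by (H,+) with support Y. -/
open Classical in
/-- Disjointness of sups over disjoint index sets, for an independent family of submodules. -/
lemma biSup_disjoint_biSup_of_iSupIndep {R N ι : Type*} [Ring R] [AddCommGroup N] [Module R N]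
    {p : ι → Submodule R N} (hp : iSupIndep p) {S T : Set ι} (hST : Disjoint S T) :
    Disjoint (⨆ i ∈ S, p i) (⨆ i ∈ T, p i) := by
  rw [Submodule.disjoint_def]
  intro z hzS hzT
  rw [Submodule.mem_biSup_iff_exists_dfinsupp] at hzS hzT
  obtain ⟨u, hu⟩ := hzS
  obtain ⟨v, hv⟩ := hzT
  have hinj := hp.dfinsupp_lsum_injective
  have heq : u.filter (· ∈ S) = v.filter (· ∈ T) := by
    apply hinj; rw [hu, hv]
  have h0 : u.filter (· ∈ S) = 0 := by
    ext i
    by_cases hiS : i ∈ S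
    · have hiT : i ∉ T := fun h => hST.le_bot ⟨hiS, h⟩
      have := congrArg (fun w => w i) heq
      simpa [DFinsupp.filter_apply, hiS, hiT] using this
    · simp [DFinsupp.filter_apply, hiS]
  rw [← hu, h0, map_zero]

/-- Grouping an independent family of submodules along fibers of a map stays independent. -/
lemma iSupIndep_fiber {R N ι κ : Type*} [Ring R] [AddCommGroup N] [Module R N]
    {p : ι → Submodule R N} (hp : iSupIndep p) (f : ι → κ) :
    iSupIndep (fun k : κ => ⨆ i ∈ {i | f i = k}, p i) := by
  intro k
  have h1 : (⨆ (k' : κ) (_ : k' ≠ k), ⨆ i ∈ {i | f i = k'}, p i) ≤ ⨆ i ∈ {i | f i ≠ k}, p i := by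
    refine iSup₂_le fun k' hk' => iSup₂_le fun i hi => ?_
    have hi' : f i = k' := hi
    exact le_iSup₂ (f := fun i _ => p i) i (show f i ≠ k from hi' ▸ hk')
  have hd : Disjoint {i | f i = k} {i | f i ≠ k} :=
    Set.disjoint_left.mpr fun i (hi : f i = k) (hni : f i ≠ k) => hni hi
  exact (biSup_disjoint_biSup_of_iSupIndep hp hd).mono_right h1

/-- If `(L_g)_{g ∈ G}` is a grading of `L` by `(G,+)` with support `X` and
`f` is a contraction of `X` onto `Y ⊆ (H,+)`, then `L^y := ⊕_{x ∈ f⁻¹(y)} L_x` for `y ∈ Y`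
and `L^h := 0` for `h ∈ H \ Y` defines a grading of `L` by `(H,+)` with support `Y`. -/
theorem lie_grading_contraction
    {F G H L : Type*} [Field F] [AddGroup G] [AddGroup H] [LieRing L] [LieAlgebra F L]
    (gr : LieGradingAdd F G L) (Y : Set H) (f : G → H)
    (hsurj : f '' gr.support = Y)
    (hadd : ∀ x₁ ∈ gr.support, ∀ x₂ ∈ gr.support, ∀ x₃ ∈ gr.support,
      x₁ + x₂ = x₃ → f x₁ + f x₂ = f x₃) :
    ∃ gr' : LieGradingAdd F H L,
      (∀ h : H, gr'.piece h = ⨆ x ∈ {x ∈ gr.support | f x = h}, gr.piece x) ∧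
      gr'.support = Y := by
    classical
  have hbot : ∀ x : G, x ∉ gr.support → gr.piece x = ⊥ := fun x hx => by
    by_contra h; exact hx h
  set q : H → Submodule F L := fun h => ⨆ x ∈ {x | f x = h}, gr.piece x with hq
  have hq_eq : ∀ h : H, q h = ⨆ x ∈ {x ∈ gr.support | f x = h}, gr.piece x := by
    intro h
    apply le_antisymm
    · refine iSup₂_le fun x hx => ?_
      by_cases hxs : x ∈ gr.support
      · exact le_iSup₂ (f := fun x _ => gr.piece x) x ⟨hxs, hx⟩
      · rw [hbot x hxs]; exact bot_le
    · exact iSup₂_le fun x hx => le_iSup₂ (f := fun x _ => gr.piece x) x hx.2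
  have hmem_q : ∀ x : G, gr.piece x ≤ q (f x) := fun x =>
    le_iSup₂ (f := fun y (_ : y ∈ {y | f y = f x}) => gr.piece y) x rfl
  have hbr : ∀ g h : H, ∀ x ∈ q g, ∀ y ∈ q h, ⁅x, y⁆ ∈ q (g + h) := by
    intro g h x hx y hy
    rw [show q g = ⨆ a : {a // f a = g}, gr.piece a.1 from (iSup_subtype'' _ _).symm] at hx
    induction hx using Submodule.iSup_induction' with
    | mem a x hxa =>
      rw [show q h = ⨆ b : {b // f b = h}, gr.piece b.1 from (iSup_subtype'' _ _).symm] at hy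
      induction hy using Submodule.iSup_induction' with
      | mem b y hyb =>
        obtain ⟨a, ha⟩ := a
        obtain ⟨b, hb⟩ := b
        by_cases hxa0 : a ∈ gr.support
        · by_cases hyb0 : b ∈ gr.support
          · by_cases hab : a + b ∈ gr.support
            · have hf : f a + f b = f (a + b) := hadd a hxa0 b hyb0 (a + b) hab rfl
              have hM : gr.piece (a + b) ≤ q (g + h) := by
                rw [← ha, ← hb, hf]; exact hmem_q (a + b)
              exact hM (gr.bracket_mem a b x hxa y hyb)
            · have := gr.bracket_mem a b x hxa y hyb
              rw [hbot _ hab, Submodule.mem_bot] at this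
              rw [this]; exact Submodule.zero_mem _
          · rw [hbot _ hyb0, Submodule.mem_bot] at hyb
            rw [hyb, lie_zero]; exact Submodule.zero_mem _
        · rw [hbot _ hxa0, Submodule.mem_bot] at hxa
          rw [hxa, zero_lie]; exact Submodule.zero_mem _
      | zero => rw [lie_zero]; exact Submodule.zero_mem _
      | add y₁ y₂ _ _ h1 h2 => rw [lie_add]; exact Submodule.add_mem _ h1 h2
    | zero => rw [zero_lie]; exact Submodule.zero_mem _
    | add x₁ x₂ _ _ h1 h2 => rw [add_lie]; exact Submodule.add_mem _ h1 h2
  have htop : ⨆ h, q h = ⊤ := by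
    rw [eq_top_iff, ← gr.iSup_eq_top]
    exact iSup_le fun x => (hmem_q x).trans (le_iSup q (f x))
  refine ⟨⟨q, iSupIndep_fiber gr.independent f, htop, hbr⟩, hq_eq, ?_⟩
  ext h
  simp only [LieGradingAdd.support, Set.mem_setOf_eq, ← hsurj, Set.mem_image]
  constructor
  · intro hne
    by_contra hcon
    push_neg at hcon
    apply hne
    rw [hq_eq h]
    exact le_bot_iff.mp (iSup₂_le fun x hx => absurd hx.2 (hcon x hx.1))
  · rintro ⟨x, hxs, rfl⟩ hbotq
    exact hxs (le_bot_iff.mp ((hmem_q x).trans hbotq.le))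
end

section
/- Let G be a finitely generated abelian group (so G ≅ ℤ^m ⊕ F with m ∈ ℕ and F a finite abelian group) and let X be an arithmetically-free subset of G. Then there exists a group homomorphism π : G → H to a finite abelian group H such that π(X) is an arithmetically-free subset of H. -/
open scoped DirectSum


/-- If `G` is a finitely generated abelian group and `X` an
arithmetically-free subset of `G`, then there is a homomorphism `π : G → H` to a finite
abelian group `H` such that `π(X)` is arithmetically-free. -/
theorem arithFree_image_of_fg
    {G : Type*} [AddCommGroup G] [AddGroup.FG G] (X : Set G) (hX : ArithFree X) :
    ∃ (H : Type) (_ : AddCommGroup H) (_ : Finite H) (π : G →+ H),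
      ArithFree (π '' X) := by
  -- proof below
  classical
  obtain ⟨hXfin, hprog⟩ := hX
  have hn : ∀ x, ∀ g, ∃ n : ℕ, x ∈ X → g ∈ X → x + n • g ∉ X := by
    intro x g
    by_cases hx : x ∈ X
    · by_cases hg : g ∈ X
      · by_contra h
        push_neg at h
        exact hprog x hx g hg (fun n => (h n).2.2)
      · exact ⟨0, fun _ hg' => absurd hg' hg⟩
    · exact ⟨0, fun hx' _ => absurd hx' hx⟩
  choose nn hnn using hn
  set D : Set G := (fun p : G × G × G => p.1 + nn p.1 p.2.1 • p.2.1 - p.2.2) ''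
    (X ×ˢ X ×ˢ X) with hD
  have hDfin : D.Finite := (hXfin.prod (hXfin.prod hXfin)).image _
  have hD0 : ∀ d ∈ D, d ≠ 0 := by
    rintro d ⟨⟨x, g, y⟩, ⟨hx, hg, hy⟩, rfl⟩ h0
    have : x + nn x g • g = y := by
      have := sub_eq_zero.mp h0
      simpa using this
    exact hnn x g hx hg (this ▸ hy)
  obtain ⟨n, ι, hι, p, hp, e, ⟨f⟩⟩ := AddCommGroup.equiv_free_prod_directSum_zmod G
  haveI : ∀ i, NeZero (p i ^ e i) := fun i => ⟨pow_ne_zero _ (hp i).pos.ne'⟩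
  haveI : Finite (⨁ i : ι, ZMod (p i ^ e i)) :=
    Finite.of_injective (fun x => (x : ∀ i, ZMod (p i ^ e i))) DFunLike.coe_injective
  set k : ℕ := 1 + hDfin.toFinset.sup
    (fun d => (f d).1.support.sup (fun i => ((f d).1 i).natAbs)) with hk
  haveI : NeZero k := ⟨by omega⟩
  set ψ : (Fin n →₀ ℤ) →+ (Fin n → ZMod k) :=
    { toFun := fun v i => ((v i : ℤ) : ZMod k)
      map_zero' := by ext i; simp
      map_add' := by intro a b; ext i; simp } with hψ
  refine ⟨(Fin n → ZMod k) × ⨁ i : ι, ZMod (p i ^ e i), inferInstance, inferInstance,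
    (ψ.prodMap (AddMonoidHom.id _)).comp f.toAddMonoidHom, ?_, ?_⟩
  · exact hXfin.image _
  set π : G →+ (Fin n → ZMod k) × ⨁ i : ι, ZMod (p i ^ e i) :=
    (ψ.prodMap (AddMonoidHom.id _)).comp f.toAddMonoidHom with hπ
  have hπD : ∀ d ∈ D, π d ≠ 0 := by
    intro d hd h0
    have hfd : f d ≠ 0 := fun h => hD0 d hd (by simpa using congrArg f.symm h)
    have h1 : ψ (f d).1 = 0 := congrArg Prod.fst h0
    have h2 : (f d).2 = 0 := congrArg Prod.snd h0
    have hfd1 : (f d).1 ≠ 0 := by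
      intro h
      exact hfd (Prod.ext h h2)
    obtain ⟨i, hi⟩ := Finsupp.ne_iff.mp hfd1
    have hci : ((((f d).1 i : ℤ)) : ZMod k) = 0 := congrFun h1 i
    rw [ZMod.intCast_zmod_eq_zero_iff_dvd] at hci
    have hcne : (f d).1 i ≠ 0 := by simpa using hi
    have hle : ((f d).1 i).natAbs ≤ k - 1 := by
      have hmem : i ∈ (f d).1.support := Finsupp.mem_support_iff.mpr hcne
      have h2' : ((f d).1 i).natAbs ≤
          (f d).1.support.sup (fun i => ((f d).1 i).natAbs) :=
        Finset.le_sup (f := fun i => ((f d).1 i).natAbs) hmem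
      have h3' : (f d).1.support.sup (fun i => ((f d).1 i).natAbs) ≤
          hDfin.toFinset.sup
            (fun d => (f d).1.support.sup (fun i => ((f d).1 i).natAbs)) :=
        Finset.le_sup (f := fun d => (f d).1.support.sup
          (fun i => ((f d).1 i).natAbs)) (hDfin.mem_toFinset.mpr hd)
      omega
    have hk1 : (k : ℤ) ≤ |((f d).1 i)| := Int.le_of_dvd (abs_pos.mpr hcne) ((dvd_abs _ _).mpr hci)
    have hk' : k ≤ ((f d).1 i).natAbs := by
      rw [Int.abs_eq_natAbs] at hk1; exact_mod_cast hk1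
    omega
  rintro x' ⟨x, hx, rfl⟩ g' ⟨g, hg, rfl⟩ hall
  obtain ⟨y, hy, hyeq⟩ := hall (nn x g)
  have : π x + (nn x g) • π g = π (x + nn x g • g) := by
    simp [map_add, map_nsmul]
  rw [this] at hyeq
  have hdD : x + nn x g • g - y ∈ D := ⟨(x, g, y), ⟨hx, hg, hy⟩, rfl⟩
  exact hπD _ hdD (by rw [map_sub, hyeq, sub_self])
end

section
/- Let L be a Lie algebra over a field F with a grading (L_g)_{g∈G} by an abelian group G whose support X is arithmetically-free. Then there exist a finite abelian group H and a grading of L by H whose support Y is arithmetically-free and satisfies |Y| ≤ |X|. -/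
lemma exists_finHom {G : Type*} [AddCommGroup G] (S : Finset G) :
    ∃ (H : Type) (_ : AddCommGroup H) (_ : Finite H) (ψ : G → H),
      (∀ a b : G, a ∈ AddSubgroup.closure (S : Set G) → b ∈ AddSubgroup.closure (S : Set G) →
        ψ (a + b) = ψ a + ψ b) ∧
      (∀ a ∈ S, ∀ b ∈ S, ψ a = ψ b → a = b) := by
  classical
  set A := AddSubgroup.closure (S : Set G) with hA
  haveI : AddGroup.FG A := inferInstance
  obtain ⟨n, ι, fι, p, hp, e, ⟨f⟩⟩ := AddCommGroup.equiv_free_prod_directSum_zmod A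
  haveI : ∀ i, NeZero (p i ^ e i) := fun i => ⟨pow_ne_zero _ (hp i).ne_zero⟩
  haveI : ∀ i, Fintype (ZMod (p i ^ e i)) :=
    fun i => @ZMod.fintype _ ⟨pow_ne_zero _ (hp i).ne_zero⟩
  haveI : Finite (DirectSum ι fun i => ZMod (p i ^ e i)) :=
    inferInstanceAs (Finite (Π₀ i, ZMod (p i ^ e i)))
  set M : ℕ := S.attach.sup (fun s =>
    Finset.univ.sup fun i : Fin n =>
      ((f ⟨s.1, AddSubgroup.subset_closure s.2⟩).1 i).natAbs) with hM
  set N : ℕ := 2 * M + 1 with hN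
  haveI : NeZero N := ⟨by omega⟩
  set ψ : G → (Fin n → ZMod N) × (DirectSum ι fun i => ZMod (p i ^ e i)) :=
    fun g => if h : g ∈ A then (fun i => ((f ⟨g, h⟩).1 i : ZMod N), (f ⟨g, h⟩).2) else 0
    with hψ
  refine ⟨(Fin n → ZMod N) × (DirectSum ι fun i => ZMod (p i ^ e i)), inferInstance,
    inferInstance, ψ, ?_, ?_⟩
  · intro a b ha hb
    rw [hψ]
    simp only
    rw [dif_pos (add_mem ha hb), dif_pos ha, dif_pos hb]
    have h1 : (⟨a + b, add_mem ha hb⟩ : A) = ⟨a, ha⟩ + ⟨b, hb⟩ := rfl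
    rw [h1, map_add]
    refine Prod.ext (funext fun i => ?_) rfl
    simp [Prod.fst_add, Finsupp.add_apply]
  · intro a ha b hb hab
    have ha' : a ∈ A := AddSubgroup.subset_closure ha
    have hb' : b ∈ A := AddSubgroup.subset_closure hb
    rw [hψ] at hab
    simp only at hab
    rw [dif_pos ha', dif_pos hb'] at hab
    have h1 := congrFun (congrArg Prod.fst hab)
    have h2 := congrArg Prod.snd hab
    simp only at h1 h2
    have hbound : ∀ (c : G) (hc : c ∈ S) (i : Fin n),
        ((f ⟨c, AddSubgroup.subset_closure hc⟩).1 i).natAbs ≤ M := by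
      intro c hc i
      refine le_trans (Finset.le_sup
        (f := fun j : Fin n => ((f ⟨c, AddSubgroup.subset_closure hc⟩).1 j).natAbs)
        (Finset.mem_univ i)) ?_
      rw [hM]
      exact Finset.le_sup
        (f := fun s : {x // x ∈ S} => Finset.univ.sup fun j : Fin n =>
          ((f ⟨s.1, AddSubgroup.subset_closure s.2⟩).1 j).natAbs)
        (Finset.mem_attach S ⟨c, hc⟩)
    have key : f ⟨a, ha'⟩ = f ⟨b, hb'⟩ := by
      refine Prod.ext (Finsupp.ext fun i => ?_) h2
      have hmod := (ZMod.intCast_eq_intCast_iff _ _ _).1 (h1 i)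
      have hd : (N : ℤ) ∣ ((f ⟨b, hb'⟩).1 i - (f ⟨a, ha'⟩).1 i) := Int.ModEq.dvd hmod
      have hba := hbound a ha i
      have hbb := hbound b hb i
      have hz : (f ⟨b, hb'⟩).1 i - (f ⟨a, ha'⟩).1 i = 0 := by
        refine Int.eq_zero_of_abs_lt_dvd hd ?_
        rw [Int.abs_eq_natAbs]
        exact_mod_cast (by omega :
          ((f ⟨b, hb'⟩).1 i - (f ⟨a, ha'⟩).1 i).natAbs < N)
      linarith [hz]
    have := f.injective key
    exact congrArg Subtype.val this

/-- If a Lie algebra `L` over `F` is graded by an abelian group `G` with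
arithmetically-free support `X`, then there is a finite abelian group `H` and a grading of
`L` by `H` whose support `Y` is arithmetically-free and satisfies `|Y| ≤ |X|`. -/
theorem lie_grading_finite_abelian_support
    {F G L : Type*} [Field F] [AddCommGroup G] [LieRing L] [LieAlgebra F L]
    (gr : LieGradingAdd F G L) (hX : ArithFree gr.support) :
    ∃ (H : Type) (_ : AddCommGroup H) (_ : Finite H) (gr' : LieGradingAdd F H L),
      ArithFree gr'.support ∧ gr'.support.ncard ≤ gr.support.ncard := by
  classical
  obtain ⟨hfin, hfree⟩ := hX
  set X := gr.support with hXdef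
  have hbot : ∀ g : G, g ∉ X → gr.piece g = ⊥ := by
    intro g hg
    by_contra hne
    exact hg hne
  have hwit : ∀ x g : G, ∃ n : ℕ, x ∈ X → g ∈ X → x + n • g ∉ X := by
    intro x g
    by_cases hx : x ∈ X
    · by_cases hg : g ∈ X
      · by_contra h
        push_neg at h
        exact hfree x hx g hg (fun n => (h n).2.2)
      · exact ⟨0, fun _ hg' => absurd hg' hg⟩
    · exact ⟨0, fun hx' => absurd hx' hx⟩
  choose nfun hnfun using hwit
  set Xf : Finset G := hfin.toFinset with hXf
  set Sf : Finset G :=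
    Xf ∪ (Xf ×ˢ Xf).image (fun p : G × G => p.1 + (nfun p.1 p.2) • p.2) with hSf
  obtain ⟨H, instH, instHF, ψ, hadd, hinj⟩ := exists_finHom Sf
  have hXS : ∀ x ∈ X, x ∈ Sf := fun x hx =>
    Finset.mem_union_left _ (hfin.mem_toFinset.2 hx)
  have hXA : ∀ x ∈ X, x ∈ AddSubgroup.closure (Sf : Set G) := fun x hx =>
    AddSubgroup.subset_closure (hXS x hx)
  -- ψ commutes with natural multiples of closure elements
  have hsmul : ∀ a ∈ AddSubgroup.closure (Sf : Set G), ∀ n : ℕ, ψ (n • a) = n • ψ a := by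
    intro a ha n
    induction n with
    | zero =>
      simp only [zero_smul]
      have h0 := hadd 0 0 (zero_mem _) (zero_mem _)
      rw [add_zero] at h0
      exact left_eq_add.1 h0
    | succ n ih =>
      rw [succ_nsmul, hadd _ _ (AddSubgroup.nsmul_mem _ ha n) ha, ih, succ_nsmul]
  set Y : Set H := ψ '' X with hY
  have hinjX : Set.InjOn ψ X := fun a ha b hb h => hinj a (hXS a ha) b (hXS b hb) h
  set σ : H → G := Function.invFunOn ψ X with hσ
  have hσ1 : ∀ h ∈ Y, σ h ∈ X := by
    rintro h ⟨x, hx, rfl⟩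
    exact Function.invFunOn_mem ⟨x, hx, rfl⟩
  have hσ2 : ∀ h ∈ Y, ψ (σ h) = h := by
    rintro h ⟨x, hx, rfl⟩
    exact Function.invFunOn_eq ⟨x, hx, rfl⟩
  have hσψ : ∀ g ∈ X, σ (ψ g) = g := by
    intro g hg
    exact hinjX (hσ1 _ ⟨g, hg, rfl⟩) hg (hσ2 _ ⟨g, hg, rfl⟩)
  set piece' : H → Submodule F L := fun h => if h ∈ Y then gr.piece (σ h) else ⊥ with hpiece'
  have hp1 : ∀ h ∈ Y, piece' h = gr.piece (σ h) := fun h hh => if_pos hh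
  have hp2 : ∀ h ∉ Y, piece' h = ⊥ := fun h hh => if_neg hh
  -- independence
  have hindep : iSupIndep piece' := by
    intro h
    by_cases hh : h ∈ Y
    · rw [hp1 h hh]
      refine (gr.independent (σ h)).mono_right ?_
      refine iSup₂_le fun j hj => ?_
      by_cases hjY : j ∈ Y
      · rw [hp1 j hjY]
        have hne : σ j ≠ σ h := by
          intro he
          exact hj (by rw [← hσ2 j hjY, ← hσ2 h hh, he])
        exact le_iSup₂ (f := fun g (_ : g ≠ σ h) => gr.piece g) (σ j) hne
      · rw [hp2 j hjY]
        exact bot_le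
    · rw [hp2 h hh]
      exact disjoint_bot_left
  -- iSup
  have htop : ⨆ h, piece' h = ⊤ := by
    rw [eq_top_iff, ← gr.iSup_eq_top]
    refine iSup_le fun g => ?_
    by_cases hg : g ∈ X
    · have he : gr.piece g = piece' (ψ g) := by
        rw [hp1 _ ⟨g, hg, rfl⟩, hσψ g hg]
      rw [he]
      exact le_iSup piece' (ψ g)
    · rw [hbot g hg]
      exact bot_le
  -- bracket
  have hbrk : ∀ a b : H, ∀ x ∈ piece' a, ∀ y ∈ piece' b, ⁅x, y⁆ ∈ piece' (a + b) := by
    intro a b x hx y hy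
    by_cases haY : a ∈ Y
    · by_cases hbY : b ∈ Y
      · rw [hp1 a haY] at hx
        rw [hp1 b hbY] at hy
        have hbr := gr.bracket_mem _ _ x hx y hy
        by_cases hs : σ a + σ b ∈ X
        · have hab : ψ (σ a + σ b) = a + b := by
            rw [hadd _ _ (hXA _ (hσ1 a haY)) (hXA _ (hσ1 b hbY)), hσ2 a haY, hσ2 b hbY]
          have habY : a + b ∈ Y := ⟨σ a + σ b, hs, hab⟩
          have hσab : σ (a + b) = σ a + σ b := by
            refine hinjX (hσ1 _ habY) hs ?_
            rw [hσ2 _ habY, hab]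
          rw [hp1 _ habY, hσab]
          exact hbr
        · rw [hbot _ hs, Submodule.mem_bot] at hbr
          rw [hbr]
          exact zero_mem _
      · rw [hp2 b hbY, Submodule.mem_bot] at hy
        rw [hy, lie_zero]
        exact zero_mem _
    · rw [hp2 a haY, Submodule.mem_bot] at hx
      rw [hx, zero_lie]
      exact zero_mem _
  set gr' : LieGradingAdd F H L :=
    ⟨piece', hindep, htop, hbrk⟩ with hgr'
  have hsupp : gr'.support = Y := by
    ext h
    constructor
    · intro hh
      by_contra hhY
      exact hh (hp2 h hhY)
    · intro hh
      intro hcon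
      exact (hσ1 h hh) (by rw [← hp1 h hh]; exact hcon)
  refine ⟨H, instH, instHF, gr', ?_, ?_⟩
  · rw [hsupp]
    constructor
    · exact hfin.image ψ
    · rintro y ⟨x₀, hx₀, rfl⟩ g ⟨g₀, hg₀, rfl⟩ hall
      have hn := hnfun x₀ g₀ hx₀ hg₀
      have heq : ψ x₀ + (nfun x₀ g₀) • ψ g₀ = ψ (x₀ + (nfun x₀ g₀) • g₀) := by
        rw [hadd _ _ (hXA _ hx₀) (AddSubgroup.nsmul_mem _ (hXA _ hg₀) _),
          hsmul _ (hXA _ hg₀)]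
      have hmem := hall (nfun x₀ g₀)
      rw [heq] at hmem
      obtain ⟨x', hx', hx'e⟩ := hmem
      have hmemS : x₀ + (nfun x₀ g₀) • g₀ ∈ Sf := by
        refine Finset.mem_union_right _ ?_
        refine Finset.mem_image.2 ⟨(x₀, g₀), ?_, rfl⟩
        exact Finset.mem_product.2 ⟨hfin.mem_toFinset.2 hx₀, hfin.mem_toFinset.2 hg₀⟩
      have := hinj x' (hXS x' hx') _ hmemS hx'e
      rw [this] at hx'
      exact hn hx'
  · rw [hsupp, hY, Set.ncard_image_of_injOn hinjX]
end

section
/- Let Y be a finite subset of a group (G,*) that is NOT arithmetically-free, and let F be a field. Then the standard filiform Lie algebra Lf over F admits a grading by G whose support Y₀ is a subset of Y. -/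
/-- `L` is a standard filiform Lie algebra over `F`: it has a basis `v, w_1, w_2, …`
(indexed by `Option ℕ`, with `none ↦ v` and `some i ↦ w_{i+1}`) satisfying
`⁅v, w_i⁆ = w_{i+1}` and `⁅w_j, w_k⁆ = 0`. -/
def IsStandardFiliform (F L : Type*) [Field F] [LieRing L] [LieAlgebra F L] : Prop :=
  ∃ b : Module.Basis (Option ℕ) F L,
    (∀ i : ℕ, ⁅b none, b (some i)⁆ = b (some (i + 1))) ∧
    (∀ i j : ℕ, ⁅b (some i), b (some j)⁆ = 0)
open Submodule

/-- Auxiliary: a grading from a basis with a degree map compatible with brackets. -/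
theorem grading_aux {F G L ι : Type*} [Field F] [Group G] [LieRing L] [LieAlgebra F L]
    (b : Module.Basis ι F L) (d : ι → G)
    (hbr : ∀ i j : ι, ⁅b i, b j⁆ ∈ Submodule.span F (b '' (d ⁻¹' {d i * d j}))) :
    ∃ gr : LieGrading F G L, gr.support ⊆ Set.range d := by
  set pce : G → Submodule F L := fun h => Submodule.span F (b '' (d ⁻¹' {h})) with hpce
  have hpiece : ∀ h, pce h =
      Submodule.map (b.repr.symm : (ι →₀ F) →ₗ[F] L) (Finsupp.supported F F (d ⁻¹' {h})) := by
    intro h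
    rw [Finsupp.supported_eq_span_single, Submodule.map_span, ← Set.image_comp, hpce]
    refine congrArg (Submodule.span F) (Set.image_congr fun i _ => ?_)
    exact (b.repr_symm_single_one i).symm
  have hind0 : iSupIndep (fun h : G => Finsupp.supported F F (d ⁻¹' {h})) := by
    rw [iSupIndep_def]
    intro h
    have h1 : (⨆ (j) (_ : j ≠ h), Finsupp.supported F F (d ⁻¹' {j})) ≤
        Finsupp.supported F F ((d ⁻¹' {h})ᶜ) := by
      refine iSup_le fun j => iSup_le fun hj => Finsupp.supported_mono ?_
      intro a ha h'
      exact hj ((Set.mem_preimage.1 ha).symm.trans h')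
    exact (Finsupp.disjoint_supported_supported disjoint_compl_right).mono_right h1
  have hind : iSupIndep pce := by
    have : pce = (Submodule.orderIsoMapComap (b.repr.symm)) ∘
        (fun h : G => Finsupp.supported F F (d ⁻¹' {h})) := funext hpiece
    rw [this]
    exact hind0.map_orderIso _
  have htop : ⨆ h, pce h = ⊤ := by
    rw [eq_top_iff, ← b.span_eq]
    refine span_le.2 ?_
    rintro _ ⟨i, rfl⟩
    exact le_iSup pce (d i) (subset_span ⟨i, rfl, rfl⟩)
  have hbm : ∀ g h : G, ∀ x ∈ pce g, ∀ y ∈ pce h, ⁅x, y⁆ ∈ pce (g * h) := by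
    intro g h x hx y hy
    have key : ∀ i : ι, d i = g → ∀ yy ∈ pce h, ⁅b i, yy⁆ ∈ pce (g * h) := by
      intro i hi yy hyy
      induction hyy using Submodule.span_induction with
      | mem z hz =>
        obtain ⟨j, hj, rfl⟩ := hz
        have := hbr i j
        rwa [hi, Set.mem_preimage.1 hj] at this
      | zero => simp
      | add a c _ _ ha hc => rw [lie_add]; exact add_mem ha hc
      | smul c z _ hz => rw [lie_smul]; exact smul_mem _ _ hz
    induction hx using Submodule.span_induction with
    | mem z hz =>
      obtain ⟨i, hi, rfl⟩ := hz
      exact key i (Set.mem_preimage.1 hi) y hy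
    | zero => simp
    | add a c _ _ ha hc => rw [add_lie]; exact add_mem ha hc
    | smul c z _ hz => rw [smul_lie]; exact smul_mem _ _ hz
  refine ⟨⟨pce, hind, htop, hbm⟩, ?_⟩
  intro h hne
  by_contra hmem
  apply hne
  have : d ⁻¹' {h} = ∅ := by
    ext i
    simp only [Set.mem_preimage, Set.mem_singleton_iff, Set.mem_empty_iff_false, iff_false]
    exact fun hd => hmem ⟨i, hd⟩
  show pce h = ⊥
  rw [hpce]
  simp [this]

/-- If a finite subset `Y` of a group `(G,*)` is not arithmetically-free,
then the standard filiform Lie algebra over `F` admits a grading by `G` whose support is a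
subset of `Y`. -/
theorem standardFiliform_grading_of_not_arithFree
    {F G L : Type*} [Field F] [Group G] [LieRing L] [LieAlgebra F L]
    (hL : IsStandardFiliform F L)
    (Y : Set G) (hYfin : Y.Finite) (hY : ¬ ArithFreeMul Y) :
    ∃ gr : LieGrading F G L, gr.support ⊆ Y := by
  obtain ⟨b, hb1, hb2⟩ := hL
  rw [ArithFreeMul, not_and] at hY
  have hY' := hY hYfin
  push_neg at hY'
  obtain ⟨Y', hsub, hcomm, x, hx, g, hg, hall⟩ := hY'
  have hc : g * x = x * g := hcomm g hg x hx
  set d : Option ℕ → G := fun o => match o with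
    | none => g
    | some i => x * g ^ i with hd
  have hbr : ∀ i j : Option ℕ, ⁅b i, b j⁆ ∈ Submodule.span F (b '' (d ⁻¹' {d i * d j})) := by
    rintro (_ | i) (_ | j)
    · rw [lie_self]; exact zero_mem _
    · rw [hb1 j]
      have hdd : d (some (j + 1)) = d none * d (some j) := by
        show x * g ^ (j + 1) = g * (x * g ^ j)
        rw [pow_succ', ← mul_assoc, ← mul_assoc, hc]
      exact Submodule.subset_span ⟨some (j + 1), hdd, rfl⟩
    · rw [← lie_skew, hb1 i]
      have hdd : d (some (i + 1)) = d (some i) * d none := by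
        show x * g ^ (i + 1) = x * g ^ i * g
        rw [pow_succ, mul_assoc]
      exact neg_mem (Submodule.subset_span ⟨some (i + 1), hdd, rfl⟩)
    · rw [hb2 i j]; exact zero_mem _
  obtain ⟨gr, hgr⟩ := grading_aux b d hbr
  refine ⟨gr, hgr.trans ?_⟩
  rintro _ ⟨(_ | i), rfl⟩
  · exact hsub hg
  · exact hsub (hall i)
end

section
/- Let X be a finite subset of an arbitrary group (G,*) and let F be a field. Then X is arithmetically-free if and only if the standard filiform Lie algebra Lf over F admits no grading by G whose support is contained in X. -/
section AuxFiliform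

variable {F L : Type*} [Field F] [LieRing L] [LieAlgebra F L]

noncomputable def filShift (b : Module.Basis (Option ℕ) F L) : L →ₗ[F] L :=
  b.constr ℕ fun i => Option.elim i 0 fun j => b (some (j + 1))

lemma filShift_none (b : Module.Basis (Option ℕ) F L) : filShift b (b none) = 0 := by
  simp [filShift, Module.Basis.constr_basis]

lemma filShift_some (b : Module.Basis (Option ℕ) F L) (j : ℕ) :
    filShift b (b (some j)) = b (some (j + 1)) := by
  simp [filShift, Module.Basis.constr_basis]

lemma coordN_none (b : Module.Basis (Option ℕ) F L) : b.coord none (b none) = 1 := by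
  simp [Module.Basis.coord_apply, Module.Basis.repr_self]

lemma coordN_some (b : Module.Basis (Option ℕ) F L) (j : ℕ) : b.coord none (b (some j)) = 0 := by
  simp [Module.Basis.coord_apply, Module.Basis.repr_self, Finsupp.single_apply]

lemma coordS_none (b : Module.Basis (Option ℕ) F L) (j : ℕ) : b.coord (some j) (b none) = 0 := by
  simp [Module.Basis.coord_apply, Module.Basis.repr_self, Finsupp.single_apply]

lemma coord_none_filShift (b : Module.Basis (Option ℕ) F L) (x : L) :
    b.coord none (filShift b x) = 0 := by
  have h : (b.coord none).comp (filShift b) = 0 := by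
    refine b.ext fun i => ?_
    cases i with
    | none => simp [filShift_none]
    | some j => simp [filShift_some, coordN_some]
  simpa using LinearMap.congr_fun h x

lemma coord_succ_filShift (b : Module.Basis (Option ℕ) F L) (j : ℕ) (x : L) :
    b.coord (some (j + 1)) (filShift b x) = b.coord (some j) x := by
  have h : (b.coord (some (j + 1))).comp (filShift b) = b.coord (some j) := by
    refine b.ext fun i => ?_
    cases i with
    | none => simp [filShift_none, coordS_none]
    | some k =>
        simp only [LinearMap.comp_apply, filShift_some, Module.Basis.coord_apply, Module.Basis.repr_self]
        rw [Finsupp.single_apply, Finsupp.single_apply]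
        simp
  exact LinearMap.congr_fun h x

lemma filShift_ne_zero (b : Module.Basis (Option ℕ) F L) {x : L} (hx : x ≠ 0)
    (hc : b.coord none x = 0) : filShift b x ≠ 0 := by
  have hrepr : b.repr x ≠ 0 := fun h => hx (by simpa using congrArg b.repr.symm h)
  obtain ⟨i, hi⟩ := Finsupp.ne_iff.mp hrepr
  cases i with
  | none => exact absurd (by simpa [Module.Basis.coord_apply] using hc) (by simpa using hi)
  | some j =>
      intro h0
      have h1 := coord_succ_filShift b j x
      rw [h0] at h1
      simp only [map_zero] at h1
      exact hi (by simpa [Module.Basis.coord_apply] using h1.symm)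

lemma filBracket (b : Module.Basis (Option ℕ) F L)
    (hb1 : ∀ i : ℕ, ⁅b none, b (some i)⁆ = b (some (i + 1)))
    (hb2 : ∀ i j : ℕ, ⁅b (some i), b (some j)⁆ = 0) (x y : L) :
    ⁅x, y⁆ = b.coord none x • filShift b y - b.coord none y • filShift b x := by
  let B : L →ₗ[F] L →ₗ[F] L := LinearMap.mk₂ F
    (fun u w => b.coord none u • filShift b w - b.coord none w • filShift b u)
    (fun u₁ u₂ w => by simp only [map_add, add_smul, smul_add]; abel)
    (fun a u w => by
      simp only [map_smul, smul_sub, smul_smul, smul_eq_mul]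
      rw [mul_comm (b.coord none w) a])
    (fun u w₁ w₂ => by simp only [map_add, add_smul, smul_add]; abel)
    (fun a u w => by
      simp only [map_smul, smul_sub, smul_smul, smul_eq_mul]
      rw [mul_comm (b.coord none u) a])
  let A : L →ₗ[F] L →ₗ[F] L := LinearMap.mk₂ F (fun u w => ⁅u, w⁆)
    add_lie smul_lie lie_add lie_smul
  have key : A = B := by
    refine b.ext fun i => b.ext fun j => ?_
    show ⁅b i, b j⁆ =
      b.coord none (b i) • filShift b (b j) - b.coord none (b j) • filShift b (b i)
    cases i with
    | none =>
        cases j with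
        | none => simp [filShift_none, coordN_none]
        | some jj => rw [hb1 jj]; simp [filShift_none, filShift_some, coordN_none, coordN_some]
    | some ii =>
        cases j with
        | none =>
            have : ⁅b (some ii), b none⁆ = -(b (some (ii + 1))) := by
              rw [← lie_skew, hb1 ii]
            rw [this]
            simp [filShift_none, filShift_some, coordN_none, coordN_some]
        | some jj => rw [hb2 ii jj]; simp [coordN_some]
  have h := LinearMap.congr_fun (LinearMap.congr_fun key x) y
  simpa [A, B] using h

end AuxFiliform

/-- A finite subset `X` of an arbitrary group `(G,*)` is
arithmetically-free iff the standard filiform Lie algebra over `F` admits no grading by `G`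
whose support is contained in `X`. -/
theorem arithFree_iff_no_standardFiliform_grading
    {F G L : Type*} [Field F] [Group G] [LieRing L] [LieAlgebra F L]
    (hL : IsStandardFiliform F L) (X : Set G) (hXfin : X.Finite) :
    ArithFreeMul X ↔ ¬ ∃ gr : LieGrading F G L, gr.support ⊆ X := by
  classical
  obtain ⟨b, hb1, hb2⟩ := hL
  constructor
  · rintro ⟨-, haf⟩ ⟨gr, hsupp⟩
    set c : L →ₗ[F] F := b.coord none with hcdef
    set S : L →ₗ[F] L := filShift b with hSdef
    -- a homogeneous element with nonzero v-coefficient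
    have hv : (b none) ∈ ⨆ g, gr.piece g := by rw [gr.iSup_eq_top]; trivial
    obtain ⟨f, hf, hfs⟩ := (Submodule.mem_iSup_iff_exists_finsupp _ _).mp hv
    have hex : ∃ g, c (f g) ≠ 0 := by
      by_contra hall
      push_neg at hall
      have h1 : (1 : F) = 0 := by
        rw [← coordN_none b, ← hfs, map_finsuppSum, Finsupp.sum]
        exact Finset.sum_eq_zero fun i _ => hall i
      exact one_ne_zero h1
    obtain ⟨g, hcy⟩ := hex
    set y : L := f g with hydef
    have hy : y ∈ gr.piece g := hf g
    have hy0 : y ≠ 0 := fun h => hcy (by rw [h, map_zero])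
    have hgX : g ∈ X := hsupp fun hbot => hy0 ((Submodule.eq_bot_iff _).mp hbot y hy)
    by_cases hdeg : ∀ z : L, (∃ h, z ∈ gr.piece h) → c z = 0 → z = 0
    · -- degenerate case: L would be finite-dimensional
      have hspan : ∀ h : G, ∃ p, p ∈ gr.piece h ∧ gr.piece h ≤ Submodule.span F {p} := by
        intro h
        by_cases hB : gr.piece h = ⊥
        · exact ⟨0, zero_mem _, by rw [hB]; exact bot_le⟩
        · obtain ⟨q, hq, hq0⟩ := Submodule.exists_mem_ne_zero_of_ne_bot hB
          have hcq : c q ≠ 0 := fun h0 => hq0 (hdeg q ⟨h, hq⟩ h0)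
          refine ⟨q, hq, fun p hp => ?_⟩
          have hmem : c q • p - c p • q ∈ gr.piece h :=
            Submodule.sub_mem _ (Submodule.smul_mem _ _ hp) (Submodule.smul_mem _ _ hq)
          have hc0 : c (c q • p - c p • q) = 0 := by
            simp only [map_sub, map_smul, smul_eq_mul]; ring
          have hz : c q • p - c p • q = 0 := hdeg _ ⟨h, hmem⟩ hc0
          have : p = ((c q)⁻¹ * c p) • q := by
            have := sub_eq_zero.mp hz
            rw [mul_smul, ← this, ← mul_smul, inv_mul_cancel₀ hcq, one_smul]
          rw [this]
          exact Submodule.smul_mem _ _ (Submodule.mem_span_singleton_self q)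
      choose p hpmem hple using hspan
      have htop : (⊤ : Submodule F L) ≤ Submodule.span F (insert 0 (p '' X)) := by
        rw [← gr.iSup_eq_top]
        refine iSup_le fun h => (hple h).trans (Submodule.span_mono ?_)
        rw [Set.singleton_subset_iff]
        by_cases hX : h ∈ X
        · exact Set.mem_insert_iff.mpr (Or.inr ⟨h, hX, rfl⟩)
        · have hbot : gr.piece h = ⊥ := by
            by_contra hne; exact hX (hsupp hne)
          have : p h = 0 := by
            have := hpmem h; rw [hbot] at this; simpa using this
          rw [this]; exact Set.mem_insert _ _
      have hfin : Module.Finite F L :=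
        ⟨Submodule.fg_def.mpr ⟨insert 0 (p '' X), (hXfin.image p).insert 0,
          eq_top_iff.mpr htop⟩⟩
      exact absurd (Module.Finite.finite_basis b) (not_finite_iff_infinite.mpr inferInstance)
    · push_neg at hdeg
      obtain ⟨z0, ⟨d, hz0d⟩, hz0c, hz00⟩ := hdeg
      -- the sequence z n
      set z : ℕ → L := fun n => (fun w => ⁅y, w⁆)^[n] z0 with hzdef
      have hzsucc : ∀ n, z (n + 1) = ⁅y, z n⁆ := fun n => Function.iterate_succ_apply' _ n z0
      have hmain : ∀ n, z n ∈ gr.piece (g ^ n * d) ∧ c (z n) = 0 ∧ z n ≠ 0 := by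
        intro n
        induction n with
        | zero => refine ⟨by simpa [hzdef] using hz0d, hz0c, hz00⟩
        | succ n ih =>
            obtain ⟨hmem, hc0, hne⟩ := ih
            have hbr : z (n + 1) = c y • S (z n) := by
              rw [hzsucc n, filBracket b hb1 hb2, hc0]
              simp [hcdef, hSdef]
            have hmem' : z (n + 1) ∈ gr.piece (g ^ (n + 1) * d) := by
              have := gr.bracket_mem g (g ^ n * d) y hy (z n) hmem
              rw [← hzsucc n] at this
              rwa [← mul_assoc, ← pow_succ'] at this
            refine ⟨hmem', ?_, ?_⟩
            · rw [hbr, map_smul, coord_none_filShift, smul_zero]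
            · rw [hbr]
              exact smul_ne_zero hcy (filShift_ne_zero b hne hc0)
      -- degrees lie in X
      have hdX : ∀ n : ℕ, g ^ n * d ∈ X := by
        intro n
        refine hsupp fun hbot => (hmain n).2.2 ?_
        exact (Submodule.eq_bot_iff _).mp hbot _ (hmain n).1
      -- commutation
      have hC : Commute g d := by
        have hz1 : z 1 ∈ gr.piece (g * d) := by simpa using (hmain 1).1
        have hz1' : z 1 = -⁅z 0, y⁆ := by
          rw [hzsucc 0, ← lie_skew]
        have hz1m : z 1 ∈ gr.piece (d * g) := by
          rw [hz1']
          exact Submodule.neg_mem _ (gr.bracket_mem d g (z 0) (by simpa [hzdef] using hz0d) y hy)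
        by_contra hne
        have hnedg : g * d ≠ d * g := hne
        have hd := gr.independent.pairwiseDisjoint hnedg
        exact (hmain 1).2.2 (Submodule.disjoint_def.mp hd _ hz1 hz1m)
      set Y : Set G := insert g (Set.range fun n : ℕ => g ^ n * d) with hYdef
      have hYX : Y ⊆ X := by
        rintro h (heq | ⟨n, rfl⟩)
        · rw [heq]; exact hgX
        · exact hdX n
      have hCall : ∀ a ∈ Y, ∀ b' ∈ Y, Commute a b' := by
        have base : ∀ a ∈ Y, Commute g a := by
          rintro a (heq | ⟨n, rfl⟩)
          · rw [heq]
          · exact ((Commute.refl g).pow_right n).mul_right hC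
        have based : ∀ a ∈ Y, Commute d a := by
          rintro a (heq | ⟨n, rfl⟩)
          · rw [heq]; exact hC.symm
          · exact (hC.symm.pow_right n).mul_right (Commute.refl d)
        rintro a (heq | ⟨n, rfl⟩) b' hb'
        · rw [heq]; exact base b' hb'
        · exact ((base b' hb').pow_left n).mul_left (based b' hb')
      refine haf Y hYX (fun a ha b' hb' => (hCall a ha b' hb').eq) d
        (Set.mem_insert_iff.mpr (Or.inr ⟨0, by simp⟩)) g (Set.mem_insert _ _) ?_
      intro n
      have : d * g ^ n = g ^ n * d := ((hC.symm).pow_right n).eq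
      rw [this]
      exact Set.mem_insert_iff.mpr (Or.inr ⟨n, rfl⟩)
  · intro hno
    refine ⟨hXfin, ?_⟩
    intro Y hYX hcommY x hx g0 hg0 hprog
    apply hno
    set deg : Option ℕ → G := fun i => Option.elim i g0 (fun j => x * g0 ^ j) with hdegdef
    set P : G → Submodule F L := fun h => Submodule.span F (b '' {i | deg i = h}) with hPdef
    have hdegY : ∀ i, deg i ∈ Y := by
      intro i; cases i with
      | none => exact hg0
      | some j => exact hprog j
    -- characterization via Finsupp.supported
    set e : (Option ℕ →₀ F) →ₗ[F] L := b.repr.symm.toLinearMap with hedef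
    have hchar : ∀ h, P h = Submodule.map e (Finsupp.supported F F {i | deg i = h}) := by
      intro h
      rw [Finsupp.supported_eq_span_single, Submodule.map_span]
      show Submodule.span F (b '' {i | deg i = h}) = _
      rw [Set.image_image]
      congr 1
    have hinj : Function.Injective e := b.repr.symm.injective
    -- independence
    have hind : iSupIndep P := by
      intro h
      have h2 : (⨆ (h' : G) (_ : h' ≠ h), P h') =
          Submodule.map e (⨆ (h' : G) (_ : h' ≠ h), Finsupp.supported F F {i | deg i = h'}) := by
        simp_rw [hchar, Submodule.map_iSup]
      rw [hchar h, h2]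
      have hdisj : Disjoint (Finsupp.supported F F {i | deg i = h})
          (⨆ (h' : G) (_ : h' ≠ h), Finsupp.supported F F {i | deg i = h'}) := by
        have hle : (⨆ (h' : G) (_ : h' ≠ h), Finsupp.supported F F {i | deg i = h'}) ≤
            Finsupp.supported F F {i | deg i ≠ h} := by
          refine iSup_le fun h' => iSup_le fun hne => Finsupp.supported_mono ?_
          intro i hi
          simp only [Set.mem_setOf_eq] at hi ⊢
          rw [hi]; exact hne
        refine Disjoint.mono_right hle (Finsupp.disjoint_supported_supported ?_)
        rw [Set.disjoint_left]
        intro i hi hni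
        exact hni hi
      rw [disjoint_iff] at hdisj ⊢
      rw [← Submodule.map_inf e hinj, hdisj, Submodule.map_bot]
    -- top
    have htop : ⨆ h, P h = ⊤ := by
      rw [eq_top_iff, ← b.span_eq, Submodule.span_le]
      rintro l ⟨i, rfl⟩
      exact Submodule.mem_iSup_of_mem (deg i) (Submodule.subset_span ⟨i, rfl, rfl⟩)
    -- brackets
    have hcomm0 : g0 * x = x * g0 := hcommY g0 hg0 x hx
    have hbasis : ∀ i j : Option ℕ, ⁅b i, b j⁆ ∈ P (deg i * deg j) := by
      intro i j
      cases i with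
      | none =>
          cases j with
          | none => simp [lie_self]
          | some jj =>
              rw [hb1 jj]
              refine Submodule.subset_span ⟨some (jj + 1), ?_, rfl⟩
              show deg (some (jj + 1)) = deg none * deg (some jj)
              show x * g0 ^ (jj + 1) = g0 * (x * g0 ^ jj)
              rw [← mul_assoc, hcomm0, mul_assoc, ← pow_succ']
      | some ii =>
          cases j with
          | none =>
              have hsk : ⁅b (some ii), b none⁆ = -(b (some (ii + 1))) := by
                rw [← lie_skew, hb1 ii]
              rw [hsk]
              refine Submodule.neg_mem _ (Submodule.subset_span ⟨some (ii + 1), ?_, rfl⟩)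
              show x * g0 ^ (ii + 1) = (x * g0 ^ ii) * g0
              rw [mul_assoc, ← pow_succ]
          | some jj => rw [hb2 ii jj]; exact Submodule.zero_mem _
    have hbr : ∀ h₁ h₂ : G, ∀ u ∈ P h₁, ∀ w ∈ P h₂, ⁅u, w⁆ ∈ P (h₁ * h₂) := by
      intro h₁ h₂ u hu w hw
      induction hu using Submodule.span_induction with
      | mem u hu' =>
          obtain ⟨i, hi, rfl⟩ := hu'
          induction hw using Submodule.span_induction with
          | mem w hw' =>
              obtain ⟨j, hj, rfl⟩ := hw'
              have := hbasis i j
              rwa [hi, hj] at this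
          | zero => rw [lie_zero]; exact Submodule.zero_mem _
          | add w₁ w₂ _ _ ih1 ih2 => rw [lie_add]; exact Submodule.add_mem _ ih1 ih2
          | smul a w _ ih => rw [lie_smul]; exact Submodule.smul_mem _ _ ih
      | zero => rw [zero_lie]; exact Submodule.zero_mem _
      | add u₁ u₂ _ _ ih1 ih2 => rw [add_lie]; exact Submodule.add_mem _ ih1 ih2
      | smul a u _ ih => rw [smul_lie]; exact Submodule.smul_mem _ _ ih
    refine ⟨⟨P, hind, htop, hbr⟩, ?_⟩
    intro h hh
    by_contra hhX
    apply hh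
    show P h = ⊥
    have hempty : {i : Option ℕ | deg i = h} = ∅ := by
      ext i
      simp only [Set.mem_setOf_eq, Set.mem_empty_iff_false, iff_false]
      intro hi
      exact hhX (hYX (hi ▸ hdegY i))
    rw [hPdef]
    simp only [hempty, Set.image_empty, Submodule.span_empty]
end

section
/- Let 𝒜 = (A,<,ω,X) be an alphabet and let ℬ = (W(A),<₁,ω₁,X) be its shift. Let S be a finite sequence on A and let T be a derivation of S. If T is full with respect to ℬ, then S is full with respect to 𝒜. -/
/-! ### Auxiliary machinery for Statement 14 -/

section ShiftAux

universe uu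
variable {A : Type uu} [LinearOrder A]

/-- Embedding of `W^n(W(A))` into `W^{n+1}(A)`. -/
def shiftW : ∀ n : ℕ, Wn (List A) n → Wn A (n + 1)
  | 0, R => R
  | n + 1, R => (R.toList.map (shiftW n) : List (Wn A (n + 1)))

lemma shiftW_lt : ∀ (n : ℕ) (x y : Wn (List A) n), x < y → shiftW n x < shiftW n y
  | 0, _, _, h => h
  | n + 1, x, y, h => by
    have key : ∀ l₁ l₂ : List (Wn (List A) n), List.Lex (· < ·) l₁ l₂ →
        List.Lex (· < ·) (l₁.map (shiftW n)) (l₂.map (shiftW n)) := by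
      intro l₁ l₂ hh
      induction hh with
      | nil => exact List.Lex.nil
      | cons _ ih => exact List.Lex.cons ih
      | rel hr => exact List.Lex.rel (shiftW_lt n _ _ hr)
    exact key x.toList y.toList h

omit [LinearOrder A] in
lemma flatten_map_singleton : ∀ l : List A, (l.map (fun a => [a])).flatten = l := by
  intro l
  induction l with
  | nil => rfl
  | cons a t ih => simp [ih]

omit [LinearOrder A] in
lemma flattenW_one (s : Wn A 1) : flattenW A 1 s = s :=
  flatten_map_singleton (s : List A)

omit [LinearOrder A] in
lemma flattenW_2_eq (T : Wn A 2) : flattenW A 2 T = ((T.toList : List (List A))).flatten := by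
  have key : ∀ L : List (Wn A 1), (L.map (flattenW A 1)).flatten = (L : List (List A)).flatten := by
    intro L
    induction L with
    | nil => rfl
    | cons x t ih =>
      rw [List.map_cons, List.flatten_cons, ih, flattenW_one x]
      rfl
  exact key T.toList

lemma shiftW_flatten : ∀ (n : ℕ) (R : Wn (List A) n),
    flattenW A (n + 1) (shiftW n R) = (flattenW (List A) n R).flatten
  | 0, R => by
    show flattenW A 1 R = ([R] : List (List A)).flatten
    exact (flattenW_one (A := A) R).trans (List.append_nil _).symm
  | n + 1, R => by
    show (((R.toList.map (shiftW n)).map (flattenW A (n + 1))).flatten)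
        = ((R.toList.map (flattenW (List A) n)).flatten).flatten
    induction R.toList with
    | nil => rfl
    | cons x t ih =>
      simp only [List.map_cons, List.flatten_cons, ih, shiftW_flatten n x,
        List.flatten_append]

lemma shiftW_regular : ∀ (n : ℕ) (R : Wn (List A) n),
    IsRegularW (List A) n R →
    (∀ s ∈ flattenW (List A) n R, IsRegularW A 1 s) →
    (∀ s ∈ flattenW (List A) n R, ∀ t ∈ flattenW (List A) n R, SameTypeW A 1 s t) →
    IsRegularW A (n + 1) (shiftW n R)
  | 0, R, _, hreg, _ => by
    have : R ∈ flattenW (List A) 0 R := by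
      show R ∈ [R]; simp
    exact hreg R this
  | n + 1, R, hR, hreg, hsame => by
    obtain ⟨hall, hst, x, l, xs, hl, hne, heq, hlt⟩ := hR
    have hmemflat : ∀ z ∈ R.toList, ∀ s ∈ flattenW (List A) n z,
        s ∈ flattenW (List A) (n + 1) R := by
      intro z hz s hs
      show s ∈ (R.toList.map (flattenW (List A) n)).flatten
      exact List.mem_flatten.2 ⟨flattenW (List A) n z, List.mem_map_of_mem hz, hs⟩
    refine ⟨?_, ?_, shiftW n x, l, xs.map (shiftW n), hl, by simpa using hne, ?_, ?_⟩
    · intro z hz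
      obtain ⟨w, hw, rfl⟩ := List.mem_map.1 hz
      exact shiftW_regular n w (hall w hw)
        (fun s hs => hreg s (hmemflat w hw s hs))
        (fun s hs t ht => hsame s (hmemflat w hw s hs) t (hmemflat w hw t ht))
    · intro z hz w hw
      obtain ⟨z', hz', rfl⟩ := List.mem_map.1 hz
      obtain ⟨w', hw', rfl⟩ := List.mem_map.1 hw
      cases n with
      | zero =>
        have hfl : flattenW (List A) 1 R = (R : List (List A)) := flattenW_one (A := List A) R
        have hz'' : z' ∈ flattenW (List A) 1 R := by rw [hfl]; exact hz'
        have hw'' : w' ∈ flattenW (List A) 1 R := by rw [hfl]; exact hw'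
        exact hsame z' hz'' w' hw''
      | succ m =>
        have h1 : z'.toList.head? = w'.toList.head? := hst z' hz' w' hw'
        show (z'.toList.map (shiftW m)).head? = (w'.toList.map (shiftW m)).head?
        rw [List.head?_map, List.head?_map, h1]
    · show R.toList.map (shiftW n)
        = List.replicate l (shiftW n x) ++ xs.map (shiftW n)
      rw [heq, List.map_append, List.map_replicate]
    · intro y hy
      obtain ⟨y', hy', rfl⟩ := List.mem_map.1 hy
      exact shiftW_lt n x y' (hlt y' hy')

end ShiftAux

/-- Let `𝒜 = (A,<,ω,X)` be an alphabet and `ℬ = (W(A),<₁,ω₁,X)` its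
shift. If `T` is a derivation of a finite sequence `S` on `A` and `T` is full with respect
to `ℬ`, then `S` is full with respect to `𝒜`. -/
theorem full_of_derivation_full
    {A G : Type*} [LinearOrder A] [AddCommGroup G]
    (ω : A → G) (X : Set G) (hX : ArithFree X)
    (S : List A) (T : Wn A 2) (hT : IsDerivation S T)
    (hfull : IsFull (fun s : List A => (s.map ω).sum) X T.toList) :
    IsFull ω X S := by
  obtain ⟨hTreg, hTinf⟩ := hT
  have hflat : flattenW A 2 T = ((T.toList : List (List A))).flatten := flattenW_2_eq T
  rcases hfull with hspan | ⟨T', hT'inf, ⟨n, R, hRreg, hRflat⟩, hsum⟩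
  · -- Case 1
    left
    rintro ⟨h, hh⟩
    apply hspan
    obtain ⟨P, Q, hPQ⟩ := hTinf
    refine ⟨h + (P.map ω).sum, ?_⟩
    rintro m ⟨k, hk, rfl⟩
    set L : List (List A) := (T.toList : List (List A)) with hL
    have hsplit : (L.take k).flatten ++ (L.drop k).flatten = flattenW A 2 T := by
      rw [hflat, ← List.flatten_append, List.take_append_drop]
      rfl
    have hpre : P ++ (L.take k).flatten <+: S := by
      refine ⟨(L.drop k).flatten ++ Q, ?_⟩
      calc P ++ (L.take k).flatten ++ ((L.drop k).flatten ++ Q)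
          = P ++ ((L.take k).flatten ++ (L.drop k).flatten) ++ Q := by
            simp [List.append_assoc]
        _ = P ++ flattenW A 2 T ++ Q := by rw [hsplit]
        _ = S := hPQ
    have hlen : (P ++ (L.take k).flatten).length ≤ S.length := hpre.length_le
    have htake : P ++ (L.take k).flatten = S.take (P ++ (L.take k).flatten).length :=
      List.prefix_iff_eq_take.mp hpre
    have hmem : ((S.take (P ++ (L.take k).flatten).length).map ω).sum ∈ spanOf ω S :=
      ⟨_, hlen, rfl⟩
    have hXmem := hh _ hmem
    rw [← htake] at hXmem
    have hrw : ((L.take k).map (fun s : List A => (s.map ω).sum)).sum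
        = (((L.take k).flatten).map ω).sum := by
      simp [List.map_flatten, List.sum_flatten, Function.comp_def]
    show h + (P.map ω).sum + ((L.take k).map (fun s : List A => (s.map ω).sum)).sum ∈ X
    rw [hrw]
    simpa [List.map_append, add_assoc] using hXmem
  · -- Case 2
    right
    refine ⟨T'.flatten, ?_, ⟨n + 1, shiftW n R, ?_, ?_⟩, ?_⟩
    · have h1 : T'.flatten <:+: flattenW A 2 T := by
        obtain ⟨p, q, hpq⟩ := hT'inf
        refine ⟨p.flatten, q.flatten, ?_⟩
        rw [hflat, ← hpq]
        simp [List.flatten_append]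
        show _ = (p ++ (T' ++ q) : List (List A)).flatten
        rw [List.flatten_append, List.flatten_append]
      exact h1.trans hTinf
    · obtain ⟨h1, h2, _⟩ := hTreg
      have hmemT : ∀ s ∈ flattenW (List A) n R, s ∈ (T.toList : List (List A)) := by
        intro s hs
        rw [hRflat] at hs
        exact hT'inf.subset hs
      exact shiftW_regular n R hRreg (fun s hs => h1 s (hmemT s hs))
        (fun s hs t ht => h2 s (hmemT s hs) t (hmemT t ht))
    · rw [shiftW_flatten, hRflat]
    · have hrw : ((T'.flatten).map ω).sum = (T'.map (fun s : List A => (s.map ω).sum)).sum := by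
        simp [List.map_flatten, List.sum_flatten, Function.comp_def]
      rw [hrw]
      exact hsum
end
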